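/- Fix d ≥ 1. Let a ∈ S^{d-1} satisfy a1 ≥ a2 ≥ ... ≥ ad ≥ 0 with a1 > 0, and let t satisfy 0 ≤ t ≤ a1 - (a2 + ... + ad). Then the d-dimensional Lebesgue measure of the slab {x ∈ [-1/2,1/2]^d : |⟨a,x⟩| ≤ t/2} equals t/a1. -/

import Mathlib

open MeasureTheory

theorem slab_cube_parallelepiped_volume
    (d : ℕ) (a : Fin (d + 1) → ℝ) (t : ℝ)
    (hunit : ∑ i, (a i) ^ 2 = 1)
    (hmono : Antitone a) (hlast : 0 ≤ a (Fin.last d)) (h0 : 0 < a 0)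
    (ht0 : 0 ≤ t) (ht1 : t ≤ a 0 - ∑ i ∈ Finset.univ.erase 0, a i) :
    volume {x : EuclideanSpace ℝ (Fin (d + 1)) |
        (∀ i, |x i| ≤ 1 / 2) ∧ |∑ i, a i * x i| ≤ t / 2}
      = ENNReal.ofReal (t / a 0) := by
  have ha : ∀ i, 0 ≤ a i := fun i => le_trans hlast (hmono (Fin.le_last i))
  have herase : ∑ i ∈ Finset.univ.erase 0, a i = ∑ j : Fin d, a j.succ := by
    have h2 : a 0 + ∑ i ∈ Finset.univ.erase 0, a i = ∑ i, a i :=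
      Finset.add_sum_erase _ a (Finset.mem_univ 0)
    have h3 := Fin.sum_univ_succ a
    linarith
  set Sa : ℝ := ∑ j : Fin d, a j.succ with hSa
  have ht1' : t ≤ a 0 - Sa := herase ▸ ht1
  set s : Set (ℝ × (Fin d → ℝ)) :=
    {p | (|p.1| ≤ 1 / 2 ∧ ∀ j, |p.2 j| ≤ 1 / 2) ∧
      |a 0 * p.1 + ∑ j, a j.succ * p.2 j| ≤ t / 2} with hs_def
  have hs_meas : MeasurableSet s := by
    have h1 : MeasurableSet {p : ℝ × (Fin d → ℝ) | |p.1| ≤ 1 / 2} :=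
      measurableSet_le (measurable_fst.abs) measurable_const
    have h2 : MeasurableSet {p : ℝ × (Fin d → ℝ) | ∀ j, |p.2 j| ≤ 1 / 2} := by
      rw [Set.setOf_forall]
      exact MeasurableSet.iInter fun j =>
        measurableSet_le ((measurable_snd.eval (a := j)).abs) measurable_const
    have h3 : MeasurableSet {p : ℝ × (Fin d → ℝ) |
        |a 0 * p.1 + ∑ j, a j.succ * p.2 j| ≤ t / 2} := by
      apply measurableSet_le _ measurable_const
      apply Measurable.abs
      exact (measurable_fst.const_mul _).add
        (Finset.measurable_sum _ fun j _ => (measurable_snd.eval (a := j)).const_mul _)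
    exact ((h1.inter h2).inter h3 : _)
  set T : Set (Fin (d + 1) → ℝ) :=
    {x | (∀ i, |x i| ≤ 1 / 2) ∧ |∑ i, a i * x i| ≤ t / 2} with hT_def
  have hT_meas : MeasurableSet T := by
    have h1 : MeasurableSet {x : Fin (d + 1) → ℝ | ∀ i, |x i| ≤ 1 / 2} := by
      rw [Set.setOf_forall]
      exact MeasurableSet.iInter fun i =>
        measurableSet_le ((measurable_pi_apply i).abs) measurable_const
    have h2 : MeasurableSet {x : Fin (d + 1) → ℝ | |∑ i, a i * x i| ≤ t / 2} :=
      measurableSet_le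
        (Finset.measurable_sum _ fun i _ => (measurable_pi_apply i).const_mul _).abs
        measurable_const
    exact (h1.inter h2 : _)
  -- step 1: Euclidean volume to pi volume
  have step1 : volume {x : EuclideanSpace ℝ (Fin (d + 1)) |
      (∀ i, |x i| ≤ 1 / 2) ∧ |∑ i, a i * x i| ≤ t / 2} = volume T := by
    have hE : NullMeasurableSet {x : EuclideanSpace ℝ (Fin (d + 1)) |
        (∀ i, |x i| ≤ 1 / 2) ∧ |∑ i, a i * x i| ≤ t / 2} volume :=
      (hT_meas.preimage (MeasurableEquiv.toLp 2 (Fin (d + 1) → ℝ)).symm.measurable).nullMeasurableSet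
    exact (((EuclideanSpace.volume_preserving_symm_measurableEquiv_toLp
      (Fin (d + 1))).symm).measure_preimage hE).symm
  -- step 2: pi volume to product volume
  have step2 : volume T = volume s := by
    have hmp := volume_preserving_piFinSuccAbove (fun _ : Fin (d + 1) => ℝ) 0
    rw [← hmp.measure_preimage hs_meas.nullMeasurableSet]
    congr 1
    ext x
    simp only [hT_def, hs_def, Set.mem_preimage, Set.mem_setOf_eq,
      MeasurableEquiv.piFinSuccAbove_apply, Fin.removeNth,
      Fin.succAbove_zero, Fin.forall_fin_succ, Fin.sum_univ_succ]
    tauto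
  rw [step1, step2, Measure.volume_eq_prod, Measure.prod_apply_symm hs_meas]
  have cube_meas : MeasurableSet {y : Fin d → ℝ | ∀ j, |y j| ≤ 1 / 2} := by
    rw [Set.setOf_forall]
    exact MeasurableSet.iInter fun j =>
      measurableSet_le ((measurable_pi_apply j).abs) measurable_const
  have fiber : ∀ y : Fin d → ℝ,
      volume ((fun x => (x, y)) ⁻¹' s) =
        Set.indicator {y : Fin d → ℝ | ∀ j, |y j| ≤ 1 / 2}
          (fun _ => ENNReal.ofReal (t / a 0)) y := by
    intro y
    by_cases hy : ∀ j, |y j| ≤ 1 / 2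
    · rw [Set.indicator_of_mem (by exact hy : y ∈ {y : Fin d → ℝ | ∀ j, |y j| ≤ 1 / 2})]
      set S : ℝ := ∑ j, a j.succ * y j with hS
      have hSle : |S| ≤ Sa / 2 := by
        calc |S| ≤ ∑ j, |a j.succ * y j| := Finset.abs_sum_le_sum_abs _ _
        _ ≤ ∑ j : Fin d, a j.succ * (1 / 2) := by
            apply Finset.sum_le_sum
            intro j _
            rw [abs_mul, abs_of_nonneg (ha _)]
            exact mul_le_mul_of_nonneg_left (hy j) (ha _)
        _ = Sa / 2 := by rw [← Finset.sum_mul]; ring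
      have hset : (fun x => (x, y)) ⁻¹' s =
          Set.Icc ((-(t / 2) - S) / a 0) ((t / 2 - S) / a 0) := by
        ext x
        simp only [hs_def, Set.mem_preimage, Set.mem_setOf_eq, Set.mem_Icc, ← hS]
        constructor
        · rintro ⟨-, habs⟩
          rw [abs_le] at habs
          constructor
          · rw [div_le_iff₀ h0]; linarith [habs.1]
          · rw [le_div_iff₀ h0]; linarith [habs.2]
        · rintro ⟨hl, hu⟩
          rw [div_le_iff₀ h0] at hl
          rw [le_div_iff₀ h0] at hu
          have habs : |a 0 * x + S| ≤ t / 2 := by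
            rw [abs_le]; constructor <;> nlinarith
          refine ⟨⟨?_, hy⟩, habs⟩
          have h1 : |a 0 * x| ≤ t / 2 + Sa / 2 := by
            have he : a 0 * x = (a 0 * x + S) + (-S) := by ring
            calc |a 0 * x| = |(a 0 * x + S) + (-S)| := by rw [← he]
            _ ≤ |a 0 * x + S| + |(-S)| := abs_add_le _ _
            _ = |a 0 * x + S| + |S| := by rw [abs_neg]
            _ ≤ t / 2 + Sa / 2 := add_le_add habs hSle
          rw [abs_mul, abs_of_pos h0] at h1
          exact (mul_le_mul_iff_of_pos_left h0).mp (le_trans h1 (by linarith))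
      rw [hset, Real.volume_Icc]
      congr 1
      field_simp
      ring
    · rw [Set.indicator_of_notMem
        (by exact hy : y ∉ {y : Fin d → ℝ | ∀ j, |y j| ≤ 1 / 2})]
      have hempty : (fun x => (x, y)) ⁻¹' s = ∅ := by
        ext x
        simp only [hs_def, Set.mem_preimage, Set.mem_setOf_eq, Set.mem_empty_iff_false,
          iff_false]
        tauto
      rw [hempty, measure_empty]
  calc ∫⁻ y, volume ((fun x => (x, y)) ⁻¹' s)
      = ∫⁻ y, Set.indicator {y : Fin d → ℝ | ∀ j, |y j| ≤ 1 / 2}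
          (fun _ => ENNReal.ofReal (t / a 0)) y := lintegral_congr fiber
    _ = ENNReal.ofReal (t / a 0) * volume {y : Fin d → ℝ | ∀ j, |y j| ≤ 1 / 2} :=
        lintegral_indicator_const cube_meas _
    _ = ENNReal.ofReal (t / a 0) := by
        have hcube : {y : Fin d → ℝ | ∀ j, |y j| ≤ 1 / 2} =
            Set.pi Set.univ (fun _ : Fin d => Set.Icc (-(1 / 2) : ℝ) (1 / 2)) := by
          ext y
          simp [Set.mem_pi, Set.mem_Icc, abs_le, Pi.le_def, forall_and]
        rw [hcube, volume_pi_pi]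
        simp [Real.volume_Icc]
        norm_num
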